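/- For all a, b > 0 with a ≠ b, S(a,b) - L(a,b) ≤ (5/3)·(A(a,b) - G(a,b)), where S(a,b) = √((a²+b²)/2), A(a,b) = (a+b)/2, G(a,b) = √(ab), and L(a,b) = (b-a)/(ln b - ln a). -/

import Mathlib

private lemma sinh_lb (t : ℝ) (ht : 0 ≤ t) : t + t^3/6 ≤ Real.sinh t := by
  have hP : 1 + t + t^2/2 + t^3/6 + t^4/24 ≤ Real.exp t := by
    have := Real.sum_le_exp_of_nonneg ht 5
    simp [Finset.sum_range_succ] at this
    norm_num [Nat.factorial] at this
    linarith
  have hE0 : (0:ℝ) < Real.exp t := Real.exp_pos t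
  have hq : (1 + t + t^2/2 + t^3/6 + t^4/24)^2 - (1 + t + t^2/2 + t^3/6 + t^4/24)*(2*t + t^3/3) - 1 ≥ 0 := by
    nlinarith [pow_nonneg ht 6, pow_nonneg ht 8]
  have hPq : (1 + t + t^2/2 + t^3/6 + t^4/24) - (2*t + t^3/3) ≥ 0 := by
    nlinarith [sq_nonneg (t^2 - 2*t), sq_nonneg (2*t - 3)]
  have hEq : Real.exp t ^ 2 - Real.exp t * (2*t + t^3/3) - 1 ≥ 0 := by
    nlinarith [mul_nonneg (sub_nonneg.2 hP) (sub_nonneg.2 hPq), mul_nonneg (sub_nonneg.2 hP) hE0.le]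
  have h3 : Real.exp t - (Real.exp t)⁻¹ - (2*t + t^3/3)
      = (Real.exp t ^2 - Real.exp t * (2*t + t^3/3) - 1)/Real.exp t := by
    field_simp; ring
  have h4 : Real.exp t - (Real.exp t)⁻¹ - (2*t + t^3/3) ≥ 0 := by
    rw [h3]; positivity
  rw [Real.sinh_eq, Real.exp_neg]
  linarith

private lemma poly_key (s c t : ℝ) (h1 : c^2 = 1 + s^2) (hc : 1 ≤ c) (ht : 0 ≤ t)
    (hs : t + t^3/6 ≤ s) : 0 ≤ 6*s*c + t*s^2 - 10*t*c + 4*t := by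
  have hst : t ≤ s := by nlinarith [pow_nonneg ht 3]
  rcases le_or_gt (5*t) (3*s) with h | h
  · nlinarith [mul_nonneg (sub_nonneg.2 hst) ht, mul_nonneg (mul_nonneg ht ht) ht]
  · have hcu : c ≤ 1 + s^2/2 := by nlinarith
    have hkey : 0 ≤ 6*s - 6*t + 3*s^3 - 4*t*s^2 := by
      nlinarith [mul_nonneg (sub_nonneg.2 hs) (sq_nonneg s), mul_nonneg (sub_nonneg.2 hs) (sq_nonneg t),
        mul_nonneg (mul_nonneg ht ht) ht, sq_nonneg (s-t), mul_nonneg (sub_nonneg.2 hs) (mul_nonneg ht (le_trans ht hst)),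
        mul_nonneg (mul_nonneg (mul_nonneg ht ht) (mul_nonneg ht ht)) ht]
    nlinarith [mul_nonneg (sub_nonneg.2 (le_of_lt h)) (sub_nonneg.2 hcu)]

private lemma key_lt (a b : ℝ) (ha : 0 < a) (hb : 0 < b) (hab : a < b) :
    Real.sqrt ((a ^ 2 + b ^ 2) / 2) - (b - a) / (Real.log b - Real.log a) ≤
      (5 / 3) * ((a + b) / 2 - Real.sqrt (a * b)) := by
  set t : ℝ := (Real.log b - Real.log a) / 2 with htdef
  have ht : 0 < t := by
    have := Real.log_lt_log ha hab
    simp only [htdef]; linarith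
  set m : ℝ := Real.sqrt (a * b) with hmdef
  have hm : 0 < m := Real.sqrt_pos.2 (by positivity)
  have hE2 : Real.exp t ^ 2 = b / a := by
    rw [← Real.exp_nat_mul]
    push_cast
    rw [htdef]
    rw [show (2:ℝ) * ((Real.log b - Real.log a)/2) = Real.log b - Real.log a by ring,
      Real.exp_sub, Real.exp_log hb, Real.exp_log ha]
  have hbm : b = m * Real.exp t := by
    have : m * Real.exp t = Real.sqrt ((a*b) * Real.exp t ^ 2) := by
      rw [Real.sqrt_mul (by positivity), Real.sqrt_sq (Real.exp_pos t).le]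
    rw [this, hE2]
    rw [show a * b * (b/a) = b^2 by field_simp, Real.sqrt_sq hb.le]
  have ham : a = m * Real.exp (-t) := by
    have h2 : Real.exp (-t) ^ 2 = a / b := by
      rw [← Real.exp_nat_mul]; push_cast
      rw [htdef, show (2:ℝ) * -((Real.log b - Real.log a)/2) = Real.log a - Real.log b by ring,
        Real.exp_sub, Real.exp_log hb, Real.exp_log ha]
    have : m * Real.exp (-t) = Real.sqrt ((a*b) * Real.exp (-t) ^ 2) := by
      rw [Real.sqrt_mul (by positivity), Real.sqrt_sq (Real.exp_pos _).le]
    rw [this, h2, show a * b * (a/b) = a^2 by field_simp, Real.sqrt_sq ha.le]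
  set c : ℝ := Real.cosh t with hcdef
  set s : ℝ := Real.sinh t with hsdef
  have hc1 : 1 ≤ c := Real.one_le_cosh t
  have hc0 : 0 < c := lt_of_lt_of_le one_pos hc1
  have hcs : c ^ 2 = 1 + s ^ 2 := by
    have := Real.cosh_sq_sub_sinh_sq t; linarith
  have hsinh : t + t^3/6 ≤ s := sinh_lb t ht.le
  have hs0 : 0 < s := by nlinarith [pow_nonneg ht.le 3]
  have hab2 : (a^2 + b^2)/2 = m^2 * (c^2 + s^2) := by
    rw [ham, hbm, hcdef, hsdef, Real.cosh_eq, Real.sinh_eq]; ring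
  have haddb : a + b = 2 * m * c := by
    rw [ham, hbm, hcdef, Real.cosh_eq]; ring
  have hsubb : b - a = 2 * m * s := by
    rw [ham, hbm, hsdef, Real.sinh_eq]; ring
  have hlog : Real.log b - Real.log a = 2 * t := by rw [htdef]; ring
  have hsqrt : Real.sqrt ((a^2 + b^2)/2) ≤ m * (c + s^2/(2*c)) := by
    rw [hab2]
    have h1 : m^2 * (c^2+s^2) ≤ (m * (c + s^2/(2*c)))^2 := by
      have : (c + s^2/(2*c))^2 - (c^2 + s^2) = (s^2/(2*c))^2 := by field_simp; ring
      nlinarith [sq_nonneg (s^2/(2*c)), sq_nonneg m]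
    calc Real.sqrt (m^2 * (c^2+s^2)) ≤ Real.sqrt ((m * (c + s^2/(2*c)))^2) :=
          Real.sqrt_le_sqrt h1
      _ = m * (c + s^2/(2*c)) := Real.sqrt_sq (by positivity)
  have hpoly : 0 ≤ 6*s*c + t*s^2 - 10*t*c + 4*t := poly_key s c t hcs hc1 ht.le hsinh
  have hY : c + s^2/(2*c) - s/t ≤ (5/3)*(c - 1) := by
    have hid : (5/3)*(c-1) - (c + s^2/(2*c) - s/t)
        = (4*t*c^2 - 10*t*c - 3*t*s^2 + 6*s*c)/(6*t*c) := by
      field_simp; ring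
    have htc : t * c^2 = t * (1 + s^2) := by rw [hcs]
    have hnum : 0 ≤ 4*t*c^2 - 10*t*c - 3*t*s^2 + 6*s*c := by nlinarith [hpoly, htc]
    have : 0 ≤ (5/3)*(c-1) - (c + s^2/(2*c) - s/t) := by
      rw [hid]; positivity
    linarith
  rw [hsubb, hlog, haddb]
  have hL : 2*m*s/(2*t) = m * (s/t) := by field_simp
  rw [hL]
  have hmul := mul_le_mul_of_nonneg_left hY hm.le
  calc Real.sqrt ((a^2+b^2)/2) - m * (s/t) ≤ m * (c + s^2/(2*c)) - m*(s/t) := by linarith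
    _ = m * (c + s^2/(2*c) - s/t) := by ring
    _ ≤ m * ((5/3)*(c-1)) := hmul
    _ = (5/3) * (2*m*c/2 - m) := by ring

theorem MSL_le_MAG (a b : ℝ) (ha : 0 < a) (hb : 0 < b) (hab : a ≠ b) :
    Real.sqrt ((a ^ 2 + b ^ 2) / 2) - (b - a) / (Real.log b - Real.log a) ≤
      (5 / 3) * ((a + b) / 2 - Real.sqrt (a * b)) := by
  rcases hab.lt_or_gt with h | h
  · exact key_lt a b ha hb h
  · have hkey := key_lt b a hb ha h
    have h1 : (a - b)/(Real.log a - Real.log b) = (b - a)/(Real.log b - Real.log a) := by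
      rw [← neg_sub b a, ← neg_sub (Real.log b) (Real.log a), neg_div_neg_eq]
    rw [h1, show b^2 + a^2 = a^2 + b^2 by ring, show b + a = a + b by ring,
      show b * a = a * b by ring] at hkey
    exact hkey
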